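/- For constants Aₖ > 0, Bₖ > 0, Cₖ ≥ 0 (k = 1,…,K) and a nonnegative vector ν ∈ ℝᴺ, the sum-rate function R_sum(θ₁,…,θ_K) = Σₖ log(1 + Aₖ/(Bₖ + Cₖ⟨ν, θₖ⟩)) is convex on the product of boxes {θₖ ∈ [0,1]ᴺ}, hence the attacker's sum-rate minimization over the constraint set {0 ≤ θₙ,ₖ ≤ 1, Σₖ θₙ,ₖ ≤ 1} is a convex optimization problem. -/

import Mathlib

open Set

lemma logdiff_convex {a b : ℝ} (hb : 0 < b) (hab : b ≤ a) :
    ConvexOn ℝ (Set.Ici (0:ℝ)) (fun s => Real.log (a + s) - Real.log (b + s)) := by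
  have ha : 0 < a := hb.trans_le hab
  have key : ConvexOn ℝ (Set.Ioi (-b)) (fun s => Real.log (a + s) - Real.log (b + s)) := by
    have hbx : ∀ x ∈ Set.Ioi (-b), 0 < b + x := by
      intro x hx; simp only [Set.mem_Ioi] at hx; linarith
    have hax : ∀ x ∈ Set.Ioi (-b), 0 < a + x := by
      intro x hx; have := hbx x hx; linarith
    refine convexOn_of_hasDerivWithinAt2_nonneg (f' := fun s => (a+s)⁻¹ - (b+s)⁻¹)
      (f'' := fun s => -1/(a+s)^2 - (-1/(b+s)^2)) (convex_Ioi _) ?_ ?_ ?_ ?_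
    · intro x hx
      have h1 : ContinuousWithinAt (fun s => Real.log (a + s)) (Set.Ioi (-b)) x := by
        apply ContinuousWithinAt.log
        · exact (continuous_const.add continuous_id).continuousWithinAt
        · exact (hax x hx).ne'
      have h2 : ContinuousWithinAt (fun s => Real.log (b + s)) (Set.Ioi (-b)) x := by
        apply ContinuousWithinAt.log
        · exact (continuous_const.add continuous_id).continuousWithinAt
        · exact (hbx x hx).ne'
      exact h1.sub h2
    · intro x hx
      rw [interior_Ioi] at hx
      have d1 : HasDerivAt (fun s => Real.log (a + s)) ((a + x)⁻¹) x := by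
        have := ((hasDerivAt_id x).const_add a).log (hax x hx).ne'
        simpa using this
      have d2 : HasDerivAt (fun s => Real.log (b + s)) ((b + x)⁻¹) x := by
        have := ((hasDerivAt_id x).const_add b).log (hbx x hx).ne'
        simpa using this
      exact (d1.sub d2).hasDerivWithinAt
    · intro x hx
      rw [interior_Ioi] at hx
      have d1 : HasDerivAt (fun s => (a + s)⁻¹) (-1/(a+x)^2) x := by
        have := ((hasDerivAt_id x).const_add a).inv (hax x hx).ne'
        exact this
      have d2 : HasDerivAt (fun s => (b + s)⁻¹) (-1/(b+x)^2) x := by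
        have := ((hasDerivAt_id x).const_add b).inv (hbx x hx).ne'
        exact this
      exact (d1.sub d2).hasDerivWithinAt
    · intro x hx
      rw [interior_Ioi] at hx
      have h1 := hbx x hx
      have h2 := hax x hx
      have hsq : (b+x)^2 ≤ (a+x)^2 := by nlinarith
      have : 1/(a+x)^2 ≤ 1/(b+x)^2 := by
        apply one_div_le_one_div_of_le (by positivity) hsq
      simp only [neg_div, neg_neg]
      linarith
  exact key.subset (fun s hs => lt_of_lt_of_le (by linarith : -b < 0) hs) (convex_Ici 0)

theorem sum_rate_convex_problem (N K : ℕ) (A B C : Fin K → ℝ) (ν : Fin N → ℝ)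
    (hA : ∀ k, 0 < A k) (hB : ∀ k, 0 < B k) (hC : ∀ k, 0 ≤ C k)
    (hν : ∀ n, 0 ≤ ν n) :
    ConvexOn ℝ {θ : Fin K → Fin N → ℝ | ∀ k n, 0 ≤ θ k n ∧ θ k n ≤ 1}
        (fun θ => ∑ k, Real.log (1 + A k / (B k + C k * ∑ n, ν n * θ k n))) ∧
      Convex ℝ {θ : Fin K → Fin N → ℝ |
        (∀ k n, 0 ≤ θ k n ∧ θ k n ≤ 1) ∧ ∀ n, ∑ k, θ k n ≤ 1} := by
  set S : Set (Fin K → Fin N → ℝ) := {θ | ∀ k n, 0 ≤ θ k n ∧ θ k n ≤ 1} with hS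
  have hSconv : Convex ℝ S := by
    intro x hx y hy p q hp hq hpq
    intro k n
    have h1 := hx k n
    have h2 := hy k n
    constructor
    · have : 0 ≤ p * x k n + q * y k n := by
        apply add_nonneg <;> exact mul_nonneg (by assumption) (by tauto)
      simpa using this
    · have : p * x k n + q * y k n ≤ p * 1 + q * 1 := by
        apply add_le_add <;>
          apply mul_le_mul_of_nonneg_left (by tauto) (by assumption)
      simpa [hpq] using this
  -- linear functional
  set L : Fin K → (Fin K → Fin N → ℝ) → ℝ := fun k θ => C k * ∑ n, ν n * θ k n with hL
  have hLnonneg : ∀ k (θ : Fin K → Fin N → ℝ), θ ∈ S → 0 ≤ L k θ := by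
    intro k θ hθ
    apply mul_nonneg (hC k)
    exact Finset.sum_nonneg fun n _ => mul_nonneg (hν n) (hθ k n).1
  have hLlin : ∀ k (x y : Fin K → Fin N → ℝ) (p q : ℝ),
      L k (p • x + q • y) = p * L k x + q * L k y := by
    intro k x y p q
    simp only [hL, Pi.add_apply, Pi.smul_apply, smul_eq_mul]
    have : ∑ n, ν n * (p * x k n + q * y k n)
        = p * ∑ n, ν n * x k n + q * ∑ n, ν n * y k n := by
      rw [Finset.mul_sum, Finset.mul_sum, ← Finset.sum_add_distrib]
      exact Finset.sum_congr rfl fun n _ => by ring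
    rw [this]
    ring
  -- rewrite each term
  have hTeq : ∀ k (s : ℝ), 0 ≤ s →
      Real.log (1 + A k / (B k + s)) = Real.log (A k + B k + s) - Real.log (B k + s) := by
    intro k s hs
    have hBs : 0 < B k + s := by have := hB k; linarith
    have hABs : 0 < A k + B k + s := by have := hA k; linarith
    have : 1 + A k / (B k + s) = (A k + B k + s) / (B k + s) := by
      field_simp; ring
    rw [this, Real.log_div hABs.ne' hBs.ne']
  have hg : ∀ k, ConvexOn ℝ (Set.Ici (0:ℝ))
      (fun s => Real.log (A k + B k + s) - Real.log (B k + s)) :=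
    fun k => logdiff_convex (hB k) (by have := hA k; linarith)
  have hterm : ∀ k, ConvexOn ℝ S
      (fun θ => Real.log (1 + A k / (B k + L k θ))) := by
    intro k
    refine ⟨hSconv, ?_⟩
    intro x hx y hy p q hp hq hpq
    have hxL := hLnonneg k x hx
    have hyL := hLnonneg k y hy
    have hcomb : L k (p • x + q • y) = p * L k x + q * L k y := hLlin k x y p q
    have hcombmem : (0:ℝ) ≤ p * L k x + q * L k y :=
      add_nonneg (mul_nonneg hp hxL) (mul_nonneg hq hyL)
    dsimp only
    rw [hTeq k _ (hcomb ▸ hcombmem), hTeq k _ hxL, hTeq k _ hyL, hcomb]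
    have := (hg k).2 (Set.mem_Ici.mpr hxL) (Set.mem_Ici.mpr hyL) hp hq hpq
    simpa [smul_eq_mul] using this
  constructor
  · have : ∀ t : Finset (Fin K), ConvexOn ℝ S
        (fun θ => ∑ k ∈ t, Real.log (1 + A k / (B k + L k θ))) := by
      intro t
      induction t using Finset.induction with
      | empty => simpa using convexOn_const (0:ℝ) hSconv
      | @insert j t hj ih =>
        have := (hterm j).add ih
        simp only [Finset.sum_insert hj]
        exact this
    exact this Finset.univ
  · intro x hx y hy p q hp hq hpq
    obtain ⟨hx1, hx2⟩ := hx
    obtain ⟨hy1, hy2⟩ := hy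
    refine ⟨hSconv hx1 hy1 hp hq hpq, ?_⟩
    intro n
    have : ∑ k, (p • x + q • y) k n = p * ∑ k, x k n + q * ∑ k, y k n := by
      simp only [Pi.add_apply, Pi.smul_apply, smul_eq_mul]
      rw [Finset.mul_sum, Finset.mul_sum, ← Finset.sum_add_distrib]
    rw [this]
    calc p * ∑ k, x k n + q * ∑ k, y k n ≤ p * 1 + q * 1 := by
          apply add_le_add <;> exact mul_le_mul_of_nonneg_left (by tauto) (by assumption)
      _ = 1 := by linarith
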